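/- arXiv:2202.02504 — 3 statements merged into one kernel-verified Lean document; each statement's English description precedes it below -/
import Mathlib

section
/- The third term of the Drude distribution, (Γ/π)·(ω² + Ω₀²)/((ω² − Ω₀²)² + Γ²ω²), integrates to 1 over [0, ∞) for any Γ > 0 and Ω₀ > 0. -/
open MeasureTheory Real

theorem drude_third_term_normalized
    (Γ Ω₀ : ℝ) (hΓ : 0 < Γ) (hΩ₀ : 0 < Ω₀) :
    (∫ ω in Set.Ioi (0:ℝ),
      (Γ/π) * (ω^2 + Ω₀^2) / ((ω^2 - Ω₀^2)^2 + Γ^2 * ω^2)) = 1 := by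
  have hπ := Real.pi_pos
  set φ : ℝ → ℝ := fun ω => ω - Ω₀^2/ω with hφ
  set g : ℝ → ℝ := fun u => (Γ/π) / (u^2 + Γ^2) with hg
  have himg : φ '' Set.Ioi 0 = Set.univ := by
    ext u
    simp only [Set.mem_image, Set.mem_univ, iff_true]
    have hs : Real.sqrt (u^2 + 4*Ω₀^2) ^ 2 = u^2 + 4*Ω₀^2 :=
      Real.sq_sqrt (by positivity)
    have h1 : |u| < Real.sqrt (u^2 + 4*Ω₀^2) := by
      rw [← Real.sqrt_sq_eq_abs]
      exact Real.sqrt_lt_sqrt (sq_nonneg u) (by nlinarith)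
    have hx : (0:ℝ) < (u + Real.sqrt (u^2 + 4*Ω₀^2))/2 := by
      cases abs_cases u with
      | inl h => linarith [h.1]
      | inr h => linarith [h.1]
    refine ⟨(u + Real.sqrt (u^2 + 4*Ω₀^2))/2, hx, ?_⟩
    have hne : u + Real.sqrt (u^2 + 4*Ω₀^2) ≠ 0 := by
      intro h; rw [h] at hx; norm_num at hx
    simp only [hφ]
    field_simp
    nlinarith [hs]
  have hinj : Set.InjOn φ (Set.Ioi 0) := by
    intro a ha b hb h
    simp only [Set.mem_Ioi] at ha hb
    simp only [hφ] at h
    have h2 : a * b ≠ 0 := by positivity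
    field_simp at h
    have h3 : (a - b) * (a*b + Ω₀^2) = 0 := by linear_combination h
    rcases mul_eq_zero.1 h3 with h4 | h4
    · linarith [sub_eq_zero.1 h4]
    · nlinarith [mul_pos ha hb]
  have hderiv : ∀ x ∈ Set.Ioi (0:ℝ),
      HasDerivWithinAt φ (1 + Ω₀^2/x^2) (Set.Ioi 0) x := by
    intro x hx
    have hx0 : x ≠ 0 := ne_of_gt hx
    have h1 : HasDerivAt (fun ω : ℝ => Ω₀^2 / ω) (-(Ω₀^2 / x^2)) x := by
      simpa [div_eq_mul_inv, neg_div, mul_comm] using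
        (hasDerivAt_inv hx0).const_mul (Ω₀^2)
    have h2 : HasDerivAt φ (1 - -(Ω₀^2/x^2)) x := (hasDerivAt_id x).sub h1
    have h3 : (1:ℝ) - -(Ω₀^2/x^2) = 1 + Ω₀^2/x^2 := by ring
    exact (h3 ▸ h2).hasDerivWithinAt
  have key := integral_image_eq_integral_abs_deriv_smul measurableSet_Ioi hderiv hinj g
  rw [himg, Measure.restrict_univ] at key
  have heq : ∀ x ∈ Set.Ioi (0:ℝ),
      |1 + Ω₀^2/x^2| • g (φ x)
        = (Γ/π) * (x^2 + Ω₀^2) / ((x^2 - Ω₀^2)^2 + Γ^2 * x^2) := by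
    intro x hx
    simp only [Set.mem_Ioi] at hx
    have hx0 : x ≠ 0 := ne_of_gt hx
    have hpos : (0:ℝ) < 1 + Ω₀^2/x^2 := by positivity
    rw [abs_of_pos hpos, smul_eq_mul]
    simp only [hg, hφ]
    have d1 : (x - Ω₀^2/x)^2 + Γ^2 ≠ 0 := by positivity
    have d2 : (x^2 - Ω₀^2)^2 + Γ^2*x^2 ≠ 0 := by positivity
    field_simp
  rw [setIntegral_congr_fun measurableSet_Ioi heq] at key
  rw [← key]
  have h1 : ∀ u : ℝ, g u = (Γ/π * Γ⁻¹^2) * (1 + (u/Γ)^2)⁻¹ := by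
    intro u
    simp only [hg]
    field_simp
    ring
  simp_rw [h1]
  rw [integral_const_mul]
  have h2 : (∫ u : ℝ, (1 + (u/Γ)^2)⁻¹) = |Γ| • ∫ x : ℝ, (1+x^2)⁻¹ :=
    Measure.integral_comp_div (fun x => (1+x^2)⁻¹) Γ
  rw [h2, integral_univ_inv_one_add_sq, abs_of_pos hΓ, smul_eq_mul]
  field_simp
end

section
/- The large-cutoff radiation-bath identity: for Γ, Ω₀ > 0, the function Γ(ω² + Ω₀²)/((ω² − Ω₀²)² + Γ²ω²) − Γ/Ω₀² tends to −Γ/Ω₀² as ω → ∞, and its first term, divided by π, is a probability density on [0, ∞): it is positive and its integral equals 1. -/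
open MeasureTheory Real Filter

set_option maxHeartbeats 1000000 in
theorem radiation_large_cutoff
    (Γ Ω₀ : ℝ) (hΓ : 0 < Γ) (hΩ₀ : 0 < Ω₀) :
    (∀ ω : ℝ, 0 ≤ ω →
      0 < (1/π) * (Γ * (ω^2 + Ω₀^2) / ((ω^2 - Ω₀^2)^2 + Γ^2 * ω^2))) ∧
    (∫ ω in Set.Ioi (0:ℝ),
      (1/π) * (Γ * (ω^2 + Ω₀^2) / ((ω^2 - Ω₀^2)^2 + Γ^2 * ω^2))) = 1 ∧
    Tendsto (fun ω : ℝ =>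
        Γ * (ω^2 + Ω₀^2) / ((ω^2 - Ω₀^2)^2 + Γ^2 * ω^2) - Γ / Ω₀^2)
      atTop (nhds (-(Γ / Ω₀^2))) := by
  -- the density and the antiderivative
  set f : ℝ → ℝ := fun ω => Γ * (ω^2 + Ω₀^2) / ((ω^2 - Ω₀^2)^2 + Γ^2 * ω^2) with hf
  have hden : ∀ ω : ℝ, 0 < (ω^2 - Ω₀^2)^2 + Γ^2 * ω^2 := by
    intro ω
    rcases eq_or_ne ω 0 with h | h
    · subst h; simp; positivity
    · have : 0 < Γ^2 * ω^2 := by positivity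
      nlinarith [sq_nonneg (ω^2 - Ω₀^2)]
  have hfpos : ∀ ω : ℝ, 0 ≤ ω → 0 < f ω := by
    intro ω hω
    apply div_pos (by positivity) (hden ω)
  -- antiderivative
  set F : ℝ → ℝ := fun x => arctan ((x^2 - Ω₀^2) / (Γ * x)) with hF
  have hFd : ∀ x : ℝ, 0 < x → HasDerivAt F (f x) x := by
    intro x hx
    have hx0 : Γ * x ≠ 0 := by positivity
    have hg : HasDerivAt (fun x : ℝ => (x^2 - Ω₀^2) / (Γ * x))
        ((2 * x * (Γ * x) - (x^2 - Ω₀^2) * Γ) / (Γ * x)^2) x := by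
      have h1 : HasDerivAt (fun x : ℝ => x^2 - Ω₀^2) (2 * x) x := by
        simpa using ((hasDerivAt_pow 2 x).sub_const (Ω₀^2))
      have h2 : HasDerivAt (fun x : ℝ => Γ * x) Γ x := by
        simpa using (hasDerivAt_id x).const_mul Γ
      exact h1.div h2 hx0
    have := (Real.hasDerivAt_arctan ((x^2 - Ω₀^2) / (Γ * x))).comp x hg
    refine this.congr_deriv ?_
    have hxx : x ≠ 0 := hx.ne'
    have hΓ' : Γ ≠ 0 := hΓ.ne'
    have hdx := (hden x).ne'
    simp only [hf]
    field_simp [hf]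
    ring
  -- limit of F at +∞
  have hFtop : Tendsto F atTop (nhds (π / 2)) := by
    have hg : Tendsto (fun x : ℝ => (x^2 - Ω₀^2) / (Γ * x)) atTop atTop := by
      have heq : ∀ᶠ x : ℝ in atTop, x / Γ + -(Ω₀^2 / (Γ * x)) = (x^2 - Ω₀^2) / (Γ * x) := by
        filter_upwards [eventually_gt_atTop 0] with x hx
        field_simp
        ring
      refine Tendsto.congr' heq ?_
      have hmul : Tendsto (fun x : ℝ => Γ * x) atTop atTop :=
        Tendsto.const_mul_atTop hΓ tendsto_id
      exact Tendsto.atTop_add (Tendsto.atTop_div_const hΓ tendsto_id)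
        (Tendsto.div_atTop tendsto_const_nhds hmul).neg
    exact (Real.tendsto_arctan_atTop.mono_right nhdsWithin_le_nhds).comp hg
  -- limit of F at 0⁺
  have hF0 : Tendsto F (nhdsWithin 0 (Set.Ioi 0)) (nhds (-(π / 2))) := by
    have hg : Tendsto (fun x : ℝ => (x^2 - Ω₀^2) / (Γ * x)) (nhdsWithin 0 (Set.Ioi 0)) atBot := by
      have h1 : Tendsto (fun x : ℝ => x^2 - Ω₀^2) (nhdsWithin 0 (Set.Ioi 0))
          (nhds (-Ω₀^2)) := by
        have : Tendsto (fun x : ℝ => x^2 - Ω₀^2) (nhds 0) (nhds (0^2 - Ω₀^2)) := by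
          apply Tendsto.sub_const
          exact (continuous_pow 2).tendsto 0
        simpa using this.mono_left nhdsWithin_le_nhds
      have h2' : Tendsto (fun x : ℝ => Γ * x) (nhdsWithin 0 (Set.Ioi 0))
          (nhdsWithin 0 (Set.Ioi 0)) := by
        apply tendsto_nhdsWithin_of_tendsto_nhds_of_eventually_within
        · exact ((continuous_const.mul continuous_id).tendsto' 0 0 (by simp)).mono_left
            nhdsWithin_le_nhds
        · filter_upwards [self_mem_nhdsWithin] with x (hx : (0:ℝ) < x)
          exact Set.mem_Ioi.mpr (mul_pos hΓ hx)
      have h2 : Tendsto (fun x : ℝ => (Γ * x)⁻¹) (nhdsWithin 0 (Set.Ioi 0)) atTop := by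
        exact h2'.inv_tendsto_nhdsGT_zero
      have := Filter.Tendsto.neg_mul_atTop (neg_neg_iff_pos.mpr (by positivity) : -Ω₀^2 < 0) h1 h2
      simpa [div_eq_mul_inv] using this
    exact (Real.tendsto_arctan_atBot.mono_right nhdsWithin_le_nhds).comp hg
  -- patched antiderivative, continuous at 0 from the right
  set G : ℝ → ℝ := Function.update F 0 (-(π / 2)) with hG
  have hGd : ∀ x ∈ Set.Ioi (0:ℝ), HasDerivAt G (f x) x := by
    intro x hx
    apply (hFd x hx).congr_of_eventuallyEq
    filter_upwards [eventually_ne_nhds (ne_of_gt hx)] with y hy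
    exact Function.update_of_ne hy _ _
  have hGc : ContinuousWithinAt G (Set.Ici 0) 0 := by
    show ContinuousWithinAt (Function.update F 0 (-(π / 2))) (Set.Ici 0) 0
    apply continuousWithinAt_update_same.mpr
    rw [Set.Ici_sdiff_left]
    exact hF0
  have hGtop : Tendsto G atTop (nhds (π / 2)) := by
    apply hFtop.congr'
    filter_upwards [eventually_ne_atTop 0] with x hx
    exact (Function.update_of_ne hx _ _).symm
  have hfnonneg : ∀ x ∈ Set.Ioi (0:ℝ), 0 ≤ f x := fun x hx => (hfpos x (le_of_lt hx)).le
  have hint : IntegrableOn f (Set.Ioi 0) :=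
    integrableOn_Ioi_deriv_of_nonneg hGc hGd hfnonneg hGtop
  have hIope : (∫ ω in Set.Ioi (0:ℝ), f ω) = π / 2 - (-(π / 2)) := by
    have := integral_Ioi_of_hasDerivAt_of_tendsto hGc hGd hint hGtop
    rw [this, hG, Function.update_self]
  have hI : (∫ ω in Set.Ioi (0:ℝ), f ω) = π := by rw [hIope]; ring
  refine ⟨?_, ?_, ?_⟩
  · intro ω hω
    have := hfpos ω hω
    have hπ : 0 < 1 / π := by positivity
    exact mul_pos hπ this
  · rw [MeasureTheory.integral_const_mul, hI]
    field_simp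
  · have h0 : Tendsto f atTop (nhds 0) := by
      have key : ∀ᶠ x : ℝ in atTop, f x =
          (Γ * (1 + Ω₀^2 / x^2) / x^2) / ((1 - Ω₀^2 / x^2)^2 + Γ^2 / x^2) := by
        filter_upwards [eventually_gt_atTop 0] with x hx
        have hx2 : x^2 ≠ 0 := by positivity
        rw [hf]
        field_simp
      rw [show (0:ℝ) = (Γ * (1 + 0) * 0) / ((1 - 0)^2 + 0) by norm_num]
      apply Tendsto.congr' (key.mono fun x h => h.symm)
      have hx2 : Tendsto (fun x : ℝ => x^2) atTop atTop := by
        simpa using tendsto_pow_atTop (two_ne_zero)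
      have hq : Tendsto (fun x : ℝ => Ω₀^2 / x^2) atTop (nhds 0) :=
        Tendsto.div_atTop tendsto_const_nhds hx2
      have hq2 : Tendsto (fun x : ℝ => Γ^2 / x^2) atTop (nhds 0) :=
        Tendsto.div_atTop tendsto_const_nhds hx2
      have hnum : Tendsto (fun x : ℝ => Γ * (1 + Ω₀^2 / x^2) / x^2) atTop
          (nhds (Γ * (1 + 0) * 0)) := by
        have h1 : Tendsto (fun x : ℝ => Γ * (1 + Ω₀^2 / x^2)) atTop (nhds (Γ * (1 + 0))) :=
          tendsto_const_nhds.mul (tendsto_const_nhds.add hq)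
        have h2 : Tendsto (fun x : ℝ => (x^2)⁻¹) atTop (nhds 0) :=
          Tendsto.inv_tendsto_atTop hx2
        simpa [div_eq_mul_inv] using h1.mul h2
      have hden' : Tendsto (fun x : ℝ => (1 - Ω₀^2 / x^2)^2 + Γ^2 / x^2) atTop
          (nhds ((1 - 0)^2 + 0)) := by
        exact (((tendsto_const_nhds.sub hq).pow 2).add hq2)
      exact hnum.div hden' (by norm_num)
    have := h0.sub_const (Γ / Ω₀^2)
    simpa using this
end

section
/- The Ohmic distribution P(ω) = (γ₀/π)(ω² + ω₀²)/((ω² − ω₀²)² + γ₀²ω²) attains its maximum on [0, ∞) at a unique point ω_m, and if γ₀ < √2·ω₀ then ω_m > 0 (the density has an interior most probable frequency). -/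
open Real Set

theorem ohmic_distribution_unique_maximizer
    (γ₀ ω₀ : ℝ) (hγ : 0 < γ₀) (hω₀ : 0 < ω₀) :
    let P : ℝ → ℝ := fun ω =>
      (γ₀/π) * (ω^2 + ω₀^2) / ((ω^2 - ω₀^2)^2 + γ₀^2 * ω^2)
    ∃ ωm : ℝ, 0 ≤ ωm ∧ IsMaxOn P (Set.Ici 0) ωm ∧
      (∀ ω' : ℝ, 0 ≤ ω' → IsMaxOn P (Set.Ici 0) ω' → ω' = ωm) ∧
      (γ₀^2 < 2 * ω₀^2 → 0 < ωm) := by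
  intro P
  have hπ : 0 < γ₀ / π := div_pos hγ Real.pi_pos
  have hD : ∀ ω : ℝ, 0 < (ω^2 - ω₀^2)^2 + γ₀^2 * ω^2 := by
    intro ω
    rcases eq_or_ne ω 0 with h | h
    · subst h
      nlinarith [mul_pos (mul_pos hω₀ hω₀) (mul_pos hω₀ hω₀), sq_nonneg γ₀]
    · positivity
  -- key comparison lemma
  have hPle : ∀ a b : ℝ, (P a ≤ P b ↔
      (a^2 + ω₀^2) * ((b^2 - ω₀^2)^2 + γ₀^2 * b^2)
        ≤ (b^2 + ω₀^2) * ((a^2 - ω₀^2)^2 + γ₀^2 * a^2)) := by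
    intro a b
    simp only [P]
    rw [div_le_div_iff₀ (hD a) (hD b)]
    constructor
    · intro h
      have h2 : (γ₀/π) * ((a^2 + ω₀^2) * ((b^2 - ω₀^2)^2 + γ₀^2 * b^2))
          ≤ (γ₀/π) * ((b^2 + ω₀^2) * ((a^2 - ω₀^2)^2 + γ₀^2 * a^2)) := by
        nlinarith [h]
      exact le_of_mul_le_mul_left h2 hπ
    · intro h
      nlinarith [mul_le_mul_of_nonneg_left h hπ.le]
  by_cases hcase : γ₀^2 < 3 * ω₀^2
  · -- interior maximizer
    have hk : ω₀^2 < 4*ω₀^2 - γ₀^2 := by linarith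
    have hω₀2 : 0 < ω₀^2 := by positivity
    have hcpos : 0 < ω₀^2 * (4*ω₀^2 - γ₀^2) := mul_pos hω₀2 (by linarith)
    have hc : ω₀^2 * ω₀^2 < ω₀^2 * (4*ω₀^2 - γ₀^2) := by nlinarith
    set s := Real.sqrt (ω₀^2 * (4*ω₀^2 - γ₀^2)) with hs_def
    have hs0 : 0 ≤ s := Real.sqrt_nonneg _
    have hs2 : s^2 = ω₀^2 * (4*ω₀^2 - γ₀^2) := Real.sq_sqrt hcpos.le
    have hsgt : ω₀^2 < s := by nlinarith [hs0, hs2, hc, sq_nonneg ω₀]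
    have hspos : 0 < s := lt_trans hω₀2 hsgt
    set m := Real.sqrt (s - ω₀^2) with hm_def
    have hm0 : 0 ≤ m := Real.sqrt_nonneg _
    have hm2 : m^2 = s - ω₀^2 := Real.sq_sqrt (by linarith)
    have hmpos : 0 < m := Real.sqrt_pos.mpr (by linarith)
    have hmu : m^2 + ω₀^2 = s := by rw [hm2]; ring
    have hDm : (m^2 - ω₀^2)^2 + γ₀^2 * m^2 = (4*ω₀^2 - γ₀^2) * (2*ω₀^2 - s) := by
      rw [hm2]; linear_combination hs2
    have hmax : IsMaxOn P (Set.Ici 0) m := by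
      intro ω' _
      show P ω' ≤ P m
      rw [hPle, hDm, hmu]
      have hz : (2*(ω'^2 + ω₀^2) - s) * (s^2 - ω₀^2*(4*ω₀^2 - γ₀^2)) = 0 := by
        rw [hs2]; ring
      nlinarith [hz, mul_nonneg hs0 (sq_nonneg (ω'^2 + ω₀^2 - s))]
    refine ⟨m, hm0, hmax, ?_, fun _ => hmpos⟩
    intro ω' hω' hmax'
    have h1 : P m ≤ P ω' := hmax' (Set.mem_Ici.mpr hm0)
    rw [hPle, hDm, hmu] at h1
    have hz : (2*(ω'^2 + ω₀^2) - s) * (s^2 - ω₀^2*(4*ω₀^2 - γ₀^2)) = 0 := by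
      rw [hs2]; ring
    have hsq : (ω'^2 + ω₀^2 - s)^2 ≤ 0 := by
      nlinarith [h1, hz, hspos]
    have h0 : (ω'^2 + ω₀^2 - s)^2 = 0 := le_antisymm hsq (sq_nonneg _)
    have hu : ω'^2 + ω₀^2 - s = 0 := by
      exact pow_eq_zero_iff (by norm_num : (2:ℕ) ≠ 0) |>.mp h0
    have hω'm : ω'^2 = m^2 := by rw [hm2]; linarith
    calc ω' = Real.sqrt (ω'^2) := (Real.sqrt_sq hω').symm
      _ = Real.sqrt (m^2) := by rw [hω'm]
      _ = m := Real.sqrt_sq hm0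
  · -- maximizer at 0
    push_neg at hcase
    have hmax : IsMaxOn P (Set.Ici 0) 0 := by
      intro ω' _
      show P ω' ≤ P 0
      rw [hPle]
      nlinarith [mul_nonneg (mul_nonneg (sq_nonneg ω₀) (sq_nonneg ω'))
        (show (0:ℝ) ≤ γ₀^2 - 3*ω₀^2 by linarith),
        mul_nonneg (sq_nonneg ω₀) (sq_nonneg (ω'^2))]
    refine ⟨0, le_refl 0, hmax, ?_, ?_⟩
    · intro ω' hω' hmax'
      have h1 : P 0 ≤ P ω' := hmax' (Set.mem_Ici.mpr (le_refl 0))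
      rw [hPle] at h1
      have h4 : ω'^4 = 0 := by
        have hle : ω'^4 ≤ 0 := by
          nlinarith [h1, mul_nonneg (mul_nonneg (sq_nonneg ω₀) (sq_nonneg ω'))
            (show (0:ℝ) ≤ γ₀^2 - 3*ω₀^2 by linarith), mul_pos hω₀ hω₀, sq_nonneg ω₀]
        have hge : 0 ≤ ω'^4 := by positivity
        linarith
      exact pow_eq_zero_iff (by norm_num : (4:ℕ) ≠ 0) |>.mp h4
    · intro h
      nlinarith [mul_pos hω₀ hω₀]
end
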